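/- arXiv:2411.12971 — 5 statements merged into one kernel-verified Lean document; each statement's English description precedes it below -/
import Mathlib

section
/- For every real number u > 0, one has ∫₀¹ t^{-3/2} e^{-t/4 - u²/(4t)} dt ≥ (4/u) e^{-1/4 - (u+2)²/4}. -/
open Real MeasureTheory

/-- For every real `u > 0`,
`∫₀¹ t^{-3/2} e^{-t/4 - u²/(4t)} dt ≥ (4/u) e^{-1/4 - (u+2)²/4}`. -/
theorem stmt_1 (u : ℝ) (hu : 0 < u) :
    ∫ t in Set.Ioo (0 : ℝ) 1, t ^ (-(3 : ℝ)/2) * Real.exp (-t/4 - u^2 / (4*t))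
      ≥ (4 / u) * Real.exp (-1/4 - (u+2)^2 / 4) := by
  set f : ℝ → ℝ := fun t => t ^ (-(3 : ℝ)/2) * Real.exp (-t/4 - u^2 / (4*t)) with hf
  set s : ℝ := u / (u + 2) with hs
  have hu2 : (0:ℝ) < u + 2 := by linarith
  have hs0 : 0 < s := div_pos hu hu2
  have hs1 : s < 1 := (div_lt_one hu2).mpr (by linarith)
  set a : ℝ := s ^ 2 with ha
  have ha0 : 0 < a := by positivity
  have ha1 : a < 1 := by nlinarith
  -- measurability
  have hmeas : AEStronglyMeasurable f volume := by
    apply Measurable.aestronglyMeasurable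
    fun_prop
  -- integrability of f on Ioo 0 1
  have hbdd : ∀ t ∈ Set.Ioo (0:ℝ) 1, ‖f t‖ ≤ 64 / u^4 := by
    intro t ht
    obtain ⟨ht0, ht1⟩ := ht
    have h1 : (0:ℝ) < u^2 / (4*t) := by positivity
    have hexp2 : Real.exp (u^2/(8*t)) ≥ u^2/(8*t) := by
      have := Real.add_one_le_exp (u^2/(8*t)); linarith [this]
    have hx : Real.exp (u^2/(4*t)) ≥ (u^2/(8*t))^2 := by
      have h8 : (0:ℝ) < u^2/(8*t) := by positivity
      calc Real.exp (u^2/(4*t)) = Real.exp (u^2/(8*t)) * Real.exp (u^2/(8*t)) := by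
            rw [← Real.exp_add]; ring_nf
        _ ≥ (u^2/(8*t)) * (u^2/(8*t)) :=
            mul_le_mul hexp2 hexp2 h8.le (Real.exp_pos _).le
        _ = (u^2/(8*t))^2 := (sq (u^2/(8*t))).symm
    have hxpos : (0:ℝ) < (u^2/(8*t))^2 := by positivity
    have hexple : Real.exp (-(u^2/(4*t))) ≤ 64 * t^2 / u^4 := by
      rw [Real.exp_neg]
      have : (64 * t^2 / u^4) = ((u^2/(8*t))^2)⁻¹ := by
        field_simp; ring
      rw [this]
      exact inv_anti₀ hxpos hx
    have hrp : t ^ (-(3:ℝ)/2) ≤ t^(-2 : ℝ) := by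
      apply Real.rpow_le_rpow_of_exponent_ge ht0 ht1.le
      norm_num
    have ht2 : t ^ (-2:ℝ) = (t^2)⁻¹ := by
      rw [show (-2:ℝ) = -((2:ℕ):ℝ) by norm_num, Real.rpow_neg ht0.le, Real.rpow_natCast]
    have hfle : f t ≤ 64 / u^4 := by
      have h2 : Real.exp (-t/4 - u^2/(4*t)) ≤ Real.exp (-(u^2/(4*t))) := by
        apply Real.exp_le_exp.mpr; linarith
      calc f t ≤ t ^ (-2:ℝ) * (64 * t^2 / u^4) := by
            apply mul_le_mul hrp (h2.trans hexple) (Real.exp_pos _).le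
            positivity
        _ = 64 / u^4 := by rw [ht2]; field_simp
    rw [Real.norm_eq_abs, abs_of_nonneg (by positivity)]
    exact hfle
  have hint : IntegrableOn f (Set.Ioo (0:ℝ) 1) volume := by
    apply Measure.integrableOn_of_bounded (M := 64 / u^4) (by simp) hmeas
    exact (ae_restrict_iff' measurableSet_Ioo).mpr (Filter.Eventually.of_forall hbdd)
  -- Step: restrict to Ioo a 1
  have hsub : Set.Ioo a 1 ⊆ Set.Ioo (0:ℝ) 1 := Set.Ioo_subset_Ioo ha0.le le_rfl
  have hmono : ∫ t in Set.Ioo a 1, f t ≤ ∫ t in Set.Ioo (0:ℝ) 1, f t := by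
    apply setIntegral_mono_set hint
    · apply (ae_restrict_iff' measurableSet_Ioo).mpr
      apply Filter.Eventually.of_forall
      intro t ht
      have := ht.1
      positivity
    · exact Filter.Eventually.of_forall hsub
  -- pointwise lower bound on Ioo a 1
  set C : ℝ := Real.exp (-1/4 - (u+2)^2 / 4) with hC
  have hkey : u^2 / (4*a) = (u+2)^2/4 := by
    rw [ha, hs]; field_simp
  have hpt : ∀ t ∈ Set.Ioo a 1, C * t ^ (-(3:ℝ)/2) ≤ f t := by
    intro t ht
    obtain ⟨hta, ht1⟩ := ht
    have ht0 : 0 < t := ha0.trans hta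
    have : -1/4 - (u+2)^2/4 ≤ -t/4 - u^2/(4*t) := by
      have h1 : u^2/(4*t) ≤ u^2/(4*a) := by
        apply div_le_div_of_nonneg_left (by positivity) (by positivity)
        linarith
      rw [hkey] at h1
      linarith
    have := Real.exp_le_exp.mpr this
    calc C * t ^ (-(3:ℝ)/2) = t ^ (-(3:ℝ)/2) * C := mul_comm _ _
      _ ≤ t ^ (-(3:ℝ)/2) * Real.exp (-t/4 - u^2/(4*t)) := by
          apply mul_le_mul_of_nonneg_left this (by positivity)
  -- integrability of C * t^(-3/2) on Ioo a 1
  have hintg : IntegrableOn (fun t => C * t ^ (-(3:ℝ)/2)) (Set.Ioo a 1) volume := by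
    apply Integrable.const_mul
    have hcont : ContinuousOn (fun t:ℝ => t ^ (-(3:ℝ)/2)) (Set.Icc a 1) := by
      intro t ht
      exact (Real.continuousAt_rpow_const t _ (Or.inl (ne_of_gt (lt_of_lt_of_le ha0 ht.1)))).continuousWithinAt
    exact (hcont.integrableOn_Icc).mono_set Set.Ioo_subset_Icc_self
  have hmono2 : ∫ t in Set.Ioo a 1, C * t ^ (-(3:ℝ)/2) ≤ ∫ t in Set.Ioo a 1, f t := by
    apply setIntegral_mono_on hintg (hint.mono_set hsub) measurableSet_Ioo hpt
  -- compute the integral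
  have hcalc : ∫ t in Set.Ioo a 1, C * t ^ (-(3:ℝ)/2) = (4/u) * C := by
    rw [MeasureTheory.integral_const_mul]
    have heq : ∫ t in Set.Ioo a 1, t ^ (-(3:ℝ)/2) = ∫ t in a..1, t ^ (-(3:ℝ)/2) := by
      rw [intervalIntegral.integral_of_le ha1.le, ← MeasureTheory.integral_Ioc_eq_integral_Ioo]
    rw [heq, integral_rpow (Or.inr ⟨by norm_num, by
      intro hmem
      rw [Set.uIcc_of_le ha1.le] at hmem
      exact absurd hmem.1 (not_le.mpr ha0)⟩)]
    have h1 : (1:ℝ) ^ (-(3:ℝ)/2 + 1) = 1 := Real.one_rpow _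
    have ha12 : a ^ (-(3:ℝ)/2 + 1) = (u+2)/u := by
      rw [ha, show (-(3:ℝ)/2 + 1) = -(1/2) by norm_num,
        ← Real.rpow_natCast s 2, ← Real.rpow_mul hs0.le]
      norm_num
      rw [Real.rpow_neg_one, hs]
      field_simp
    rw [h1, ha12]
    field_simp
    ring
  rw [ge_iff_le, mul_comm]
  calc C * (4/u) = (4/u) * C := mul_comm _ _
    _ = ∫ t in Set.Ioo a 1, C * t ^ (-(3:ℝ)/2) := hcalc.symm
    _ ≤ ∫ t in Set.Ioo a 1, f t := hmono2
    _ ≤ _ := hmono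
end

section
/- There exists a universal constant D₁ > 0 such that for every ℓ ∈ (0,1], (ℓ / (4√π · sinh(ℓ/2))) · ∫₀¹ t^{-3/2} e^{-t/4 - ℓ²/(4t)} dt ≥ D₁ / ℓ. -/
open Real MeasureTheory

lemma sinh_le_mul_exp' {x : ℝ} (hx : 0 ≤ x) : Real.sinh x ≤ x * Real.exp x := by
  rw [Real.sinh_eq]
  have h := Real.add_one_le_exp (-(2 * x))
  have h2 : Real.exp (-x) = Real.exp x * Real.exp (-(2 * x)) := by
    rw [← Real.exp_add]; ring_nf
  nlinarith [Real.exp_pos (-(2 * x)), Real.exp_pos x]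

/-- There exists a universal constant `D₁ > 0` such that for every `ℓ ∈ (0,1]`,
`(ℓ / (4√π · sinh(ℓ/2))) · ∫₀¹ t^{-3/2} e^{-t/4 - ℓ²/(4t)} dt ≥ D₁ / ℓ`. -/
theorem stmt_2 :
    ∃ D₁ : ℝ, 0 < D₁ ∧ ∀ ℓ : ℝ, 0 < ℓ → ℓ ≤ 1 →
      (ℓ / (4 * Real.sqrt π * Real.sinh (ℓ/2))) *
          ∫ t in Set.Ioo (0 : ℝ) 1, t ^ (-(3 : ℝ)/2) * Real.exp (-t/4 - ℓ^2 / (4*t))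
        ≥ D₁ / ℓ := by
  have hπ : 0 < Real.sqrt π := Real.sqrt_pos.mpr Real.pi_pos
  refine ⟨Real.exp (-(5:ℝ)/4) / (4 * Real.sqrt π), by positivity, ?_⟩
  intro ℓ hℓ hℓ1
  set f : ℝ → ℝ := fun t => t ^ (-(3:ℝ)/2) * Real.exp (-t/4 - ℓ^2 / (4*t)) with hfdef
  -- integrability of f on (0,1)
  have hg : IntegrableOn (fun t : ℝ => (4/ℓ^2) * t ^ (-(1:ℝ)/2)) (Set.Ioo 0 1) := by
    apply Integrable.const_mul
    have h := intervalIntegral.intervalIntegrable_rpow' (r := -(1:ℝ)/2) (a := 0) (b := 1)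
      (by norm_num)
    rw [intervalIntegrable_iff, Set.uIoc_of_le (by norm_num : (0:ℝ) ≤ 1)] at h
    exact h.mono_set Set.Ioo_subset_Ioc_self
  have hmeas : AEStronglyMeasurable f (volume.restrict (Set.Ioo (0:ℝ) 1)) := by
    apply ContinuousOn.aestronglyMeasurable _ measurableSet_Ioo
    intro t ht
    have ht0 : t ≠ 0 := ne_of_gt ht.1
    apply ContinuousWithinAt.mul
    · exact (Real.continuousAt_rpow_const t _ (Or.inl ht0)).continuousWithinAt
    · apply ContinuousAt.continuousWithinAt
      apply Real.continuous_exp.continuousAt.comp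
      apply ContinuousAt.sub
      · fun_prop
      · exact ContinuousAt.div continuousAt_const (by fun_prop)
          (mul_ne_zero four_ne_zero ht0)
  have hbound : ∀ t ∈ Set.Ioo (0:ℝ) 1, ‖f t‖ ≤ ‖(4/ℓ^2) * t ^ (-(1:ℝ)/2)‖ := by
    intro t ht
    have ht0 : (0:ℝ) < t := ht.1
    have hx : 0 < ℓ^2/(4*t) := by positivity
    have hexp : Real.exp (-t/4 - ℓ^2/(4*t)) ≤ 4*t/ℓ^2 := by
      have h2 : ℓ^2/(4*t) ≤ Real.exp (ℓ^2/(4*t)) :=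
        le_trans (by linarith) (Real.add_one_le_exp _)
      calc Real.exp (-t/4 - ℓ^2/(4*t)) ≤ Real.exp (-(ℓ^2/(4*t))) := by
            apply Real.exp_le_exp.mpr; linarith
        _ = 1 / Real.exp (ℓ^2/(4*t)) := by rw [Real.exp_neg, one_div]
        _ ≤ 1 / (ℓ^2/(4*t)) := one_div_le_one_div_of_le hx h2
        _ = 4*t/ℓ^2 := one_div_div _ _
    have hrw : t ^ (-(3:ℝ)/2) * t = t ^ (-(1:ℝ)/2) := by
      rw [← Real.rpow_add_one ht0.ne' (-(3:ℝ)/2)]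
      norm_num
    rw [Real.norm_eq_abs, Real.norm_eq_abs, abs_of_nonneg (by positivity),
      abs_of_nonneg (by positivity)]
    calc f t ≤ t ^ (-(3:ℝ)/2) * (4*t/ℓ^2) := by
          apply mul_le_mul_of_nonneg_left hexp (by positivity)
      _ = (4/ℓ^2) * (t ^ (-(3:ℝ)/2) * t) := by ring
      _ = (4/ℓ^2) * t ^ (-(1:ℝ)/2) := by rw [hrw]
  have hint : IntegrableOn f (Set.Ioo (0:ℝ) 1) :=
    MeasureTheory.Integrable.mono hg hmeas ((ae_restrict_iff' measurableSet_Ioo).mpr (ae_of_all _ hbound))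
  have hpos : 0 ≤ᵐ[volume.restrict (Set.Ioo (0:ℝ) 1)] f := by
    rw [Filter.EventuallyLE, ae_restrict_iff' measurableSet_Ioo]
    filter_upwards with t ht
    have ht0 : (0:ℝ) < t := ht.1
    positivity
  -- the subinterval
  have ha0 : (0:ℝ) < ℓ^2/2 := by positivity
  have hb1 : ℓ^2 ≤ 1 := by nlinarith
  have hss : Set.Ioo (ℓ^2/2) (ℓ^2) ⊆ Set.Ioo (0:ℝ) 1 := by
    intro t ht
    exact ⟨lt_trans ha0 ht.1, lt_of_lt_of_le ht.2 hb1⟩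
  have hsub : ∀ t ∈ Set.Ioo (ℓ^2/2) (ℓ^2),
      ℓ ^ (-(3:ℝ)) * Real.exp (-(3:ℝ)/4) ≤ f t := by
    intro t ht
    have ht1 : ℓ^2/2 < t := ht.1
    have ht2 : t < ℓ^2 := ht.2
    have ht0 : 0 < t := lt_trans ha0 ht1
    have h1 : ℓ ^ (-(3:ℝ)) ≤ t ^ (-(3:ℝ)/2) := by
      have h2 : (ℓ^2 : ℝ) ^ (-(3:ℝ)/2) = ℓ ^ (-(3:ℝ)) := by
        rw [← Real.rpow_natCast ℓ 2, ← Real.rpow_mul hℓ.le]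
        norm_num
      rw [← h2]
      exact Real.rpow_le_rpow_of_nonpos ht0 ht2.le (by norm_num)
    have h2 : Real.exp (-(3:ℝ)/4) ≤ Real.exp (-t/4 - ℓ^2/(4*t)) := by
      apply Real.exp_le_exp.mpr
      have hq : ℓ^2/(4*t) ≤ 1/2 := by
        rw [div_le_div_iff₀ (by positivity) (by norm_num)]
        linarith
      have ht1' : t ≤ 1 := le_trans ht2.le hb1
      linarith
    calc ℓ ^ (-(3:ℝ)) * Real.exp (-(3:ℝ)/4)
        ≤ t ^ (-(3:ℝ)/2) * Real.exp (-(3:ℝ)/4) := by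
          apply mul_le_mul_of_nonneg_right h1 (Real.exp_pos _).le
      _ ≤ t ^ (-(3:ℝ)/2) * Real.exp (-t/4 - ℓ^2/(4*t)) := by
          apply mul_le_mul_of_nonneg_left h2 (by positivity)
  have hI2 : ℓ ^ (-(3:ℝ)) * Real.exp (-(3:ℝ)/4) * (ℓ^2/2)
      ≤ ∫ t in Set.Ioo (ℓ^2/2) (ℓ^2), f t := by
    have hfin : volume (Set.Ioo (ℓ^2/2) (ℓ^2)) ≠ ⊤ := by
      rw [Real.volume_Ioo]; exact ENNReal.ofReal_ne_top
    have := setIntegral_ge_of_const_le_real (μ := volume) measurableSet_Ioo hfin hsub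
      (hint.mono_set hss)
    rwa [Measure.real, Real.volume_Ioo, ENNReal.toReal_ofReal (by linarith),
      show ℓ^2 - ℓ^2/2 = ℓ^2/2 by ring] at this
  have hI1 : ∫ t in Set.Ioo (ℓ^2/2) (ℓ^2), f t ≤ ∫ t in Set.Ioo (0:ℝ) 1, f t :=
    setIntegral_mono_set hint hpos (HasSubset.Subset.eventuallyLE hss)
  -- prefactor bound
  have hsinh_pos : 0 < Real.sinh (ℓ/2) := Real.sinh_pos_iff.mpr (by positivity)
  have hsinh_le : Real.sinh (ℓ/2) ≤ (ℓ/2) * Real.exp ((1:ℝ)/2) := by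
    calc Real.sinh (ℓ/2) ≤ (ℓ/2) * Real.exp (ℓ/2) := sinh_le_mul_exp' (by positivity)
      _ ≤ (ℓ/2) * Real.exp ((1:ℝ)/2) := by
          apply mul_le_mul_of_nonneg_left (Real.exp_le_exp.mpr (by linarith)) (by positivity)
  have hP : (1:ℝ) / (2 * Real.sqrt π * Real.exp ((1:ℝ)/2))
      ≤ ℓ / (4 * Real.sqrt π * Real.sinh (ℓ/2)) := by
    rw [div_le_div_iff₀ (by positivity) (by positivity)]
    have : 4 * Real.sqrt π * Real.sinh (ℓ/2) ≤ 4 * Real.sqrt π * ((ℓ/2) * Real.exp ((1:ℝ)/2)) :=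
      mul_le_mul_of_nonneg_left hsinh_le (by positivity)
    nlinarith [Real.exp_pos ((1:ℝ)/2)]
  have hcube : ℓ ^ (-(3:ℝ)) = 1 / ℓ^3 := by
    rw [show (-(3:ℝ)) = ((-3 : ℤ) : ℝ) by norm_num, Real.rpow_intCast, zpow_neg, one_div]
    norm_cast
  have hE : Real.exp (-(5:ℝ)/4) * Real.exp ((1:ℝ)/2) = Real.exp (-(3:ℝ)/4) := by
    rw [← Real.exp_add]; norm_num
  have hIlow : 0 ≤ ℓ ^ (-(3:ℝ)) * Real.exp (-(3:ℝ)/4) * (ℓ^2/2) := by positivity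
  rw [ge_iff_le]
  calc Real.exp (-(5:ℝ)/4) / (4 * Real.sqrt π) / ℓ
      = (1 / (2 * Real.sqrt π * Real.exp ((1:ℝ)/2))) *
        (ℓ ^ (-(3:ℝ)) * Real.exp (-(3:ℝ)/4) * (ℓ^2/2)) := by
        rw [hcube]
        field_simp
        rw [neg_div, neg_div] at hE
        linear_combination 4 * hE
    _ ≤ (ℓ / (4 * Real.sqrt π * Real.sinh (ℓ/2))) *
        (ℓ ^ (-(3:ℝ)) * Real.exp (-(3:ℝ)/4) * (ℓ^2/2)) :=
        mul_le_mul_of_nonneg_right hP hIlow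
    _ ≤ (ℓ / (4 * Real.sqrt π * Real.sinh (ℓ/2))) * ∫ t in Set.Ioo (0:ℝ) 1, f t := by
        apply mul_le_mul_of_nonneg_left (le_trans hI2 hI1) (by positivity)
end

section
/- For every real number t > 0, one has (e^{−t/4}/√t) · Σ_{k=1}^∞ ∫₀^∞ ( sinh²(x/2) / sinh(kx/2) ) e^{−k²x²/(4t)} dx ≤ 2√t. -/
open Real MeasureTheory

/-- `sinh` is superadditive-ish: `n * sinh y ≤ sinh (n * y)` for `y ≥ 0`. -/
lemma aux_sinh_nat_mul (n : ℕ) {y : ℝ} (hy : 0 ≤ y) :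
    (n : ℝ) * Real.sinh y ≤ Real.sinh ((n : ℝ) * y) := by
  induction n with
  | zero => simp
  | succ n ih =>
    have h1 : ((n : ℝ) + 1) * y = (n : ℝ) * y + y := by ring
    push_cast
    rw [h1, Real.sinh_add]
    have hs := Real.sinh_nonneg_iff.mpr hy
    have hsn : 0 ≤ Real.sinh ((n : ℝ) * y) :=
      Real.sinh_nonneg_iff.mpr (by positivity)
    have hc1 : (1 : ℝ) ≤ Real.cosh y := Real.one_le_cosh y
    have hc2 : (1 : ℝ) ≤ Real.cosh ((n : ℝ) * y) := Real.one_le_cosh _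
    nlinarith [ih]

/-- Shift of a set integral over `Ioi`. -/
lemma aux_shift_Ioi (f : ℝ → ℝ) (c b : ℝ) :
    ∫ x in Set.Ioi b, f (x + c) = ∫ y in Set.Ioi (b + c), f y := by
  have h := (measurePreserving_add_right (volume : Measure ℝ) c).setIntegral_preimage_emb
    (MeasurableEquiv.addRight c).measurableEmbedding f (Set.Ioi (b + c))
  have hpre : (fun x : ℝ => x + c) ⁻¹' Set.Ioi (b + c) = Set.Ioi b := by
    rw [Set.preimage_add_const_Ioi]; simp
  simpa [hpre] using h

/-- The key Gaussian–sinh integral bound: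
`∫₀^∞ sinh(x/2) e^{-a x²} dx ≤ e^{1/(16a)}/(4a)`. -/
lemma aux_gauss_sinh {a : ℝ} (ha : 0 < a) :
    ∫ x in Set.Ioi (0 : ℝ), Real.sinh (x/2) * Real.exp (-(a * x^2))
      ≤ Real.exp (1/(16*a)) * (1/(4*a)) := by
  set c : ℝ := 1/(4*a) with hc
  have hcpos : 0 < c := by positivity
  have hkey : ∀ x : ℝ, Real.sinh (x/2) * Real.exp (-(a * x^2))
      = (1/2) * (Real.exp (-(a * (x - c)^2)) - Real.exp (-(a * (x + c)^2))) *
          Real.exp (1/(16*a)) := by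
    intro x
    have h1 : -(a * (x - c)^2) = (x/2 + -(a * x^2)) + (-(1/(16*a))) := by
      rw [hc]; field_simp
      ring
    have h2 : -(a * (x + c)^2) = (-(x/2) + -(a * x^2)) + (-(1/(16*a))) := by
      rw [hc]; field_simp
      ring
    rw [h1, h2, Real.sinh_eq]
    simp only [Real.exp_add, Real.exp_neg]
    have hne := Real.exp_ne_zero (1/(16*a))
    field_simp
  have hint1 : Integrable (fun x : ℝ => Real.exp (-(a * (x - c)^2))) := by
    have := (integrable_exp_neg_mul_sq ha).comp_sub_right c
    simpa [neg_mul] using this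
  have hint2 : Integrable (fun x : ℝ => Real.exp (-(a * (x + c)^2))) := by
    have := (integrable_exp_neg_mul_sq ha).comp_add_right c
    simpa [neg_mul] using this
  have hg : Integrable (fun y : ℝ => Real.exp (-(a * y^2))) := by
    simpa [neg_mul] using integrable_exp_neg_mul_sq ha
  calc ∫ x in Set.Ioi (0 : ℝ), Real.sinh (x/2) * Real.exp (-(a * x^2))
      = ∫ x in Set.Ioi (0 : ℝ), (1/2) * (Real.exp (-(a * (x - c)^2))
          - Real.exp (-(a * (x + c)^2))) * Real.exp (1/(16*a)) := by
        exact integral_congr_ae (Filter.Eventually.of_forall fun x => hkey x)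
    _ = (1/2) * Real.exp (1/(16*a)) *
          ((∫ x in Set.Ioi (0:ℝ), Real.exp (-(a * (x - c)^2)))
            - ∫ x in Set.Ioi (0:ℝ), Real.exp (-(a * (x + c)^2))) := by
        rw [← integral_sub hint1.integrableOn hint2.integrableOn, ← integral_const_mul]
        exact integral_congr_ae (Filter.Eventually.of_forall fun x => by ring)
    _ ≤ (1/2) * Real.exp (1/(16*a)) * (2 * c) := by
        have hshift1 : (∫ x in Set.Ioi (0:ℝ), Real.exp (-(a * (x - c)^2)))
            = ∫ y in Set.Ioi (-c), Real.exp (-(a * y^2)) := by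
          have := aux_shift_Ioi (fun y => Real.exp (-(a * y^2))) (-c) 0
          simpa [sub_eq_add_neg] using this
        have hshift2 : (∫ x in Set.Ioi (0:ℝ), Real.exp (-(a * (x + c)^2)))
            = ∫ y in Set.Ioi c, Real.exp (-(a * y^2)) := by
          have := aux_shift_Ioi (fun y => Real.exp (-(a * y^2))) c 0
          simpa using this
        have hsplit : (∫ y in Set.Ioi (-c), Real.exp (-(a * y^2)))
            = (∫ y in Set.Ioc (-c) c, Real.exp (-(a * y^2)))
              + ∫ y in Set.Ioi c, Real.exp (-(a * y^2)) := by
          rw [← setIntegral_union (Set.Ioc_disjoint_Ioi le_rfl) measurableSet_Ioi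
            hg.integrableOn hg.integrableOn,
            Set.Ioc_union_Ioi_eq_Ioi (by linarith : -c ≤ c)]
        have hIoc : (∫ y in Set.Ioc (-c) c, Real.exp (-(a * y^2))) ≤ 2 * c := by
          have h1 : (∫ y in Set.Ioc (-c) c, Real.exp (-(a * y^2)))
              ≤ ∫ _ in Set.Ioc (-c) c, (1:ℝ) := by
            apply setIntegral_mono_on hg.integrableOn
              (integrableOn_const (by simp [Real.volume_Ioc]))
              measurableSet_Ioc
            intro y _
            calc Real.exp (-(a * y^2)) ≤ Real.exp 0 :=
                  Real.exp_le_exp.mpr (by nlinarith [sq_nonneg y])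
              _ = 1 := Real.exp_zero
          have h2 : (∫ _ in Set.Ioc (-c) c, (1:ℝ)) = 2 * c := by
            rw [setIntegral_const, smul_eq_mul, mul_one, measureReal_def, Real.volume_Ioc,
              ENNReal.toReal_ofReal (by linarith : (0:ℝ) ≤ c - -c)]
            ring
          linarith
        have hexp : (0:ℝ) < (1/2) * Real.exp (1/(16*a)) := by positivity
        rw [hshift1, hshift2, hsplit]
        have : (∫ y in Set.Ioc (-c) c, Real.exp (-(a * y^2))) + (∫ y in Set.Ioi c, Real.exp (-(a * y^2))) - (∫ y in Set.Ioi c, Real.exp (-(a * y^2))) ≤ 2 * c := by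
          simpa using hIoc
        nlinarith [this, hexp]
    _ = Real.exp (1/(16*a)) * (1/(4*a)) := by rw [hc]; ring

/-- Sum over `ℕ+` of `1/k²` equals `π²/6`. -/
lemma aux_hasSum_pnat : HasSum (fun k : ℕ+ => (1:ℝ) / ((k:ℕ):ℝ)^2) (Real.pi^2/6) := by
  have h := hasSum_zeta_two
  have hinj : Function.Injective (fun k : ℕ+ => (k : ℕ)) := fun a b h => PNat.coe_injective h
  refine (Function.Injective.hasSum_iff hinj ?_).mpr h
  intro n hn
  have : n = 0 := by
    by_contra h0
    exact hn ⟨⟨n, Nat.pos_of_ne_zero h0⟩, rfl⟩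
  simp [this]

/-- For every real `t > 0`,
`(e^{−t/4}/√t) · Σ_{k=1}^∞ ∫₀^∞ (sinh²(x/2)/sinh(kx/2)) e^{−k²x²/(4t)} dx ≤ 2√t`. -/
theorem stmt_10 (t : ℝ) (ht : 0 < t) :
    (Real.exp (-t/4) / Real.sqrt t) *
        ∑' k : ℕ+, ∫ x in Set.Ioi (0 : ℝ),
          (Real.sinh (x/2) ^ 2 / Real.sinh ((k : ℝ) * x / 2)) *
            Real.exp (-((k : ℝ)^2 * x^2) / (4*t))
      ≤ 2 * Real.sqrt t := by
  set F : ℕ+ → ℝ → ℝ := fun k x =>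
    (Real.sinh (x/2) ^ 2 / Real.sinh ((k : ℝ) * x / 2)) *
      Real.exp (-((k : ℝ)^2 * x^2) / (4*t)) with hF
  set G : ℕ+ → ℝ → ℝ := fun k x =>
    Real.sinh (x/2) * Real.exp (-((k:ℝ)^2/(4*t) * x^2)) with hG
  have hk1 : ∀ k : ℕ+, (1:ℝ) ≤ (k:ℝ) := by
    intro k; exact_mod_cast k.one_le
  have hexp_eq : ∀ (k : ℕ+) (x : ℝ),
      Real.exp (-((k : ℝ)^2 * x^2) / (4*t)) = Real.exp (-((k:ℝ)^2/(4*t) * x^2)) := by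
    intro k x; congr 1; ring
  -- pointwise bound on Ioi 0 : 0 ≤ F k x ≤ G k x
  have hFG : ∀ (k : ℕ+) (x : ℝ), x ∈ Set.Ioi (0:ℝ) → F k x ≤ G k x := by
    intro k x hx
    rw [Set.mem_Ioi] at hx
    have hsx : 0 < Real.sinh (x/2) := Real.sinh_pos_iff.mpr (by linarith)
    have hsinh : (k:ℝ) * Real.sinh (x/2) ≤ Real.sinh ((k:ℝ) * (x/2)) := by
      simpa using aux_sinh_nat_mul (k : ℕ) (by linarith : (0:ℝ) ≤ x/2)
    have hle : Real.sinh (x/2) ≤ Real.sinh ((k:ℝ) * x / 2) := by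
      have : (k:ℝ) * x / 2 = (k:ℝ) * (x/2) := by ring
      rw [this]
      nlinarith [hk1 k, hsx]
    have hdenpos : 0 < Real.sinh ((k:ℝ) * x / 2) := lt_of_lt_of_le hsx hle
    have hdiv : Real.sinh (x/2) ^ 2 / Real.sinh ((k : ℝ) * x / 2) ≤ Real.sinh (x/2) := by
      rw [div_le_iff₀ hdenpos]
      nlinarith [hsx, hle]
    rw [hF, hG]
    simp only
    rw [hexp_eq k x]
    exact mul_le_mul_of_nonneg_right hdiv (Real.exp_pos _).le
  have hFnonneg : ∀ (k : ℕ+) (x : ℝ), x ∈ Set.Ioi (0:ℝ) → 0 ≤ F k x := by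
    intro k x hx
    rw [Set.mem_Ioi] at hx
    have hsx : 0 < Real.sinh (x/2) := Real.sinh_pos_iff.mpr (by linarith)
    have hden : 0 < Real.sinh ((k:ℝ) * x / 2) := by
      apply Real.sinh_pos_iff.mpr
      have := hk1 k; nlinarith
    have : 0 ≤ Real.sinh (x/2) ^ 2 / Real.sinh ((k : ℝ) * x / 2) := by positivity
    exact mul_nonneg this (Real.exp_pos _).le
  have hapos : ∀ k : ℕ+, (0:ℝ) < (k:ℝ)^2/(4*t) := by
    intro k
    have := hk1 k; positivity
  -- G k is integrable
  have hGint : ∀ k : ℕ+, IntegrableOn (G k) (Set.Ioi (0:ℝ)) := by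
    intro k
    set a : ℝ := (k:ℝ)^2/(4*t) with hadef
    have ha : 0 < a := hapos k
    set c : ℝ := 1/(4*a) with hcdef
    have hkey : ∀ x : ℝ, G k x
        = (1/2) * Real.exp (1/(16*a)) * (Real.exp (-(a * (x - c)^2)) - Real.exp (-(a * (x + c)^2))) := by
      intro x
      have h1 : -(a * (x - c)^2) = (x/2 + -(a * x^2)) + (-(1/(16*a))) := by
        rw [hcdef]; field_simp
        ring
      have h2 : -(a * (x + c)^2) = (-(x/2) + -(a * x^2)) + (-(1/(16*a))) := by
        rw [hcdef]; field_simp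
        ring
      rw [hG]
      simp only [← hadef]
      rw [h1, h2, Real.sinh_eq]
      simp only [Real.exp_add, Real.exp_neg]
      have hne := Real.exp_ne_zero (1/(16*a))
      field_simp
    have hint1 : Integrable (fun x : ℝ => Real.exp (-(a * (x - c)^2))) := by
      have := (integrable_exp_neg_mul_sq ha).comp_sub_right c
      simpa [neg_mul] using this
    have hint2 : Integrable (fun x : ℝ => Real.exp (-(a * (x + c)^2))) := by
      have := (integrable_exp_neg_mul_sq ha).comp_add_right c
      simpa [neg_mul] using this
    have : Integrable (G k) := by
      have heq : G k = fun x => (1/2) * Real.exp (1/(16*a)) *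
          (Real.exp (-(a * (x - c)^2)) - Real.exp (-(a * (x + c)^2))) := funext hkey
      rw [heq]
      exact ((hint1.sub hint2).const_mul _)
    exact this.integrableOn
  -- F k is integrable on Ioi 0
  have hFmeas : ∀ k : ℕ+, AEStronglyMeasurable (F k)
      (volume.restrict (Set.Ioi (0:ℝ))) := by
    intro k
    apply Measurable.aestronglyMeasurable
    fun_prop
  have hFint : ∀ k : ℕ+, IntegrableOn (F k) (Set.Ioi (0:ℝ)) := by
    intro k
    apply Integrable.mono' (hGint k) (hFmeas k)
    rw [ae_restrict_iff' measurableSet_Ioi]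
    filter_upwards with x hx
    rw [Real.norm_eq_abs, abs_of_nonneg (hFnonneg k x hx)]
    exact hFG k x hx
  -- the integral bound for each k
  have hIbound : ∀ k : ℕ+, (∫ x in Set.Ioi (0:ℝ), F k x)
      ≤ Real.exp (t/4) * t * (1 / ((k:ℕ):ℝ)^2) := by
    intro k
    have hkpos : (0:ℝ) < (k:ℝ) := lt_of_lt_of_le one_pos (hk1 k)
    set a : ℝ := (k:ℝ)^2/(4*t) with hadef
    have ha : 0 < a := hapos k
    have step1 : (∫ x in Set.Ioi (0:ℝ), F k x) ≤ ∫ x in Set.Ioi (0:ℝ), G k x :=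
      setIntegral_mono_on (hFint k) (hGint k) measurableSet_Ioi (hFG k)
    have step2 : (∫ x in Set.Ioi (0:ℝ), G k x) ≤ Real.exp (1/(16*a)) * (1/(4*a)) := by
      have := aux_gauss_sinh ha
      simpa [hG, neg_mul] using this
    have h16 : 1/(16*a) = t/(4*(k:ℝ)^2) := by
      rw [hadef]; field_simp
      ring
    have h4 : 1/(4*a) = t/(k:ℝ)^2 := by
      rw [hadef]; field_simp
    have hexple : Real.exp (1/(16*a)) ≤ Real.exp (t/4) := by
      apply Real.exp_le_exp.mpr
      rw [h16]
      exact div_le_div_of_nonneg_left ht.le (by norm_num) (by nlinarith [hk1 k])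
    have h4le : (1/(4*a)) = t * (1/((k:ℕ):ℝ)^2) := by
      rw [h4]
      push_cast
      ring
    calc (∫ x in Set.Ioi (0:ℝ), F k x) ≤ ∫ x in Set.Ioi (0:ℝ), G k x := step1
      _ ≤ Real.exp (1/(16*a)) * (1/(4*a)) := step2
      _ ≤ Real.exp (t/4) * (1/(4*a)) := by
          apply mul_le_mul_of_nonneg_right hexple (by positivity)
      _ = Real.exp (t/4) * t * (1 / ((k:ℕ):ℝ)^2) := by rw [h4le]; ring
  -- summability of the bounding series
  have hBsum : Summable (fun k : ℕ+ => Real.exp (t/4) * t * (1 / ((k:ℕ):ℝ)^2)) :=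
    (aux_hasSum_pnat.summable).mul_left _
  have hInonneg : ∀ k : ℕ+, 0 ≤ ∫ x in Set.Ioi (0:ℝ), F k x := by
    intro k
    apply setIntegral_nonneg measurableSet_Ioi
    intro x hx
    exact hFnonneg k x hx
  have hIsum : Summable (fun k : ℕ+ => ∫ x in Set.Ioi (0:ℝ), F k x) :=
    Summable.of_nonneg_of_le hInonneg hIbound hBsum
  have htsum : (∑' k : ℕ+, ∫ x in Set.Ioi (0:ℝ), F k x)
      ≤ ∑' k : ℕ+, Real.exp (t/4) * t * (1 / ((k:ℕ):ℝ)^2) :=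
    Summable.tsum_le_tsum hIbound hIsum hBsum
  have htsumval : (∑' k : ℕ+, Real.exp (t/4) * t * (1 / ((k:ℕ):ℝ)^2))
      = Real.exp (t/4) * t * (Real.pi^2/6) := by
    rw [tsum_mul_left, aux_hasSum_pnat.tsum_eq]
  have hpi : Real.pi^2/6 ≤ 2 := by
    nlinarith [Real.pi_lt_d2, Real.pi_gt_three]
  have hS : (∑' k : ℕ+, ∫ x in Set.Ioi (0:ℝ), F k x) ≤ Real.exp (t/4) * t * 2 := by
    calc (∑' k : ℕ+, ∫ x in Set.Ioi (0:ℝ), F k x)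
        ≤ Real.exp (t/4) * t * (Real.pi^2/6) := by rw [← htsumval]; exact htsum
      _ ≤ Real.exp (t/4) * t * 2 := by
          apply mul_le_mul_of_nonneg_left hpi (by positivity)
  have hcoef : (0:ℝ) < Real.exp (-t/4) / Real.sqrt t := by
    have := Real.sqrt_pos.mpr ht
    positivity
  calc (Real.exp (-t/4) / Real.sqrt t) *
        ∑' k : ℕ+, ∫ x in Set.Ioi (0:ℝ), F k x
      ≤ (Real.exp (-t/4) / Real.sqrt t) * (Real.exp (t/4) * t * 2) :=
        mul_le_mul_of_nonneg_left hS hcoef.le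
    _ = 2 * Real.sqrt t := by
        have he : Real.exp (-t/4) * Real.exp (t/4) = 1 := by
          rw [← Real.exp_add]; ring_nf; exact Real.exp_zero
        have hst : t / Real.sqrt t = Real.sqrt t := Real.div_sqrt
        have hsne : Real.sqrt t ≠ 0 := (Real.sqrt_pos.mpr ht).ne'
        field_simp
        rw [neg_div] at he
        nlinarith [he, hst, Real.sq_sqrt ht.le, Real.sqrt_pos.mpr ht]
end

section
/- There is a universal constant C > 0 such that for every real number R ≥ 1 and every integer L ≥ 4R + 1, one has Σ_{k=L}^∞ ( e^{k} / (2 sinh(k/2)) ) e^{−k²/(4R)} ≤ C √R · e^{−2R}. -/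
open Real MeasureTheory

/-- There is a universal constant `C > 0` such that for every real `R ≥ 1` and
every integer `L ≥ 4R + 1`,
`Σ_{k=L}^∞ (e^{k}/(2 sinh(k/2))) e^{−k²/(4R)} ≤ C √R · e^{−2R}`. -/
theorem stmt_14 :
    ∃ C : ℝ, 0 < C ∧ ∀ R : ℝ, 1 ≤ R → ∀ L : ℕ, 4*R + 1 ≤ (L : ℝ) →
      ∑' n : ℕ, (Real.exp ((L + n : ℕ) : ℝ) / (2 * Real.sinh (((L + n : ℕ) : ℝ)/2))) *
          Real.exp (-((L + n : ℕ) : ℝ)^2 / (4*R))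
        ≤ C * Real.sqrt R * Real.exp (-2*R) := by
  set C₁ : ℝ := (1 - Real.exp (-1))⁻¹ with hC₁
  set r : ℝ := Real.exp (-(1:ℝ)/2) with hr
  have hr0 : 0 < r := Real.exp_pos _
  have hr1 : r < 1 := by
    rw [hr]; apply Real.exp_lt_one_iff.mpr; norm_num
  have hC₁pos : 0 < C₁ := by
    rw [hC₁]
    have : Real.exp (-1) < 1 := Real.exp_lt_one_iff.mpr (by norm_num)
    exact inv_pos.mpr (by linarith)
  refine ⟨C₁ / (1 - r), div_pos hC₁pos (by linarith), ?_⟩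
  intro R hR L hL
  have hR0 : (0:ℝ) < R := lt_of_lt_of_le one_pos hR
  -- pointwise bound
  have key : ∀ n : ℕ,
      (Real.exp ((L + n : ℕ) : ℝ) / (2 * Real.sinh (((L + n : ℕ) : ℝ)/2))) *
          Real.exp (-((L + n : ℕ) : ℝ)^2 / (4*R))
        ≤ C₁ * Real.exp (-(L:ℝ)/2) * r ^ n := by
    intro n
    set k : ℝ := ((L + n : ℕ) : ℝ) with hk
    have hkLn : k = (L:ℝ) + n := by rw [hk]; push_cast; ring
    have hkL : (L:ℝ) ≤ k := by rw [hkLn]; nlinarith [(Nat.cast_nonneg n : (0:ℝ) ≤ n)]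
    have hk1 : (1:ℝ) ≤ k := le_trans (by nlinarith) hkL
    have hk0 : (0:ℝ) < k := lt_of_lt_of_le one_pos hk1
    have hsinh : 2 * Real.sinh (k/2) = Real.exp (k/2) * (1 - Real.exp (-k)) := by
      rw [Real.sinh_eq]
      rw [mul_sub, ← Real.exp_add]
      ring_nf
    have hfrac : Real.exp k / (2 * Real.sinh (k/2)) = Real.exp (k/2) / (1 - Real.exp (-k)) := by
      rw [hsinh, div_mul_eq_div_div, ← Real.exp_sub]
      congr 2
      ring
    have h1k : 1 - Real.exp (-1) ≤ 1 - Real.exp (-k) := by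
      have := Real.exp_le_exp.mpr (neg_le_neg hk1)
      linarith
    have h1kpos : 0 < 1 - Real.exp (-1) := by
      have : Real.exp (-1) < 1 := Real.exp_lt_one_iff.mpr (by norm_num)
      linarith
    have hb1 : Real.exp k / (2 * Real.sinh (k/2)) ≤ C₁ * Real.exp (k/2) := by
      rw [hfrac, hC₁, div_eq_mul_inv, mul_comm]
      gcongr
    have hb2 : Real.exp (-k^2/(4*R)) ≤ Real.exp (-k) := by
      apply Real.exp_le_exp.mpr
      rw [div_le_iff₀ (by positivity)]
      nlinarith
    have hprod : (Real.exp k / (2 * Real.sinh (k/2))) * Real.exp (-k^2/(4*R))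
        ≤ C₁ * Real.exp (k/2) * Real.exp (-k) := by
      have hs : 0 < 2 * Real.sinh (k/2) := by
        have := Real.sinh_pos_iff.mpr (by linarith : (0:ℝ) < k/2)
        linarith
      apply mul_le_mul hb1 hb2 (Real.exp_pos _).le
      positivity
    calc (Real.exp k / (2 * Real.sinh (k/2))) * Real.exp (-k^2/(4*R))
        ≤ C₁ * Real.exp (k/2) * Real.exp (-k) := hprod
      _ = C₁ * Real.exp (-(L:ℝ)/2) * r ^ n := by
          rw [mul_assoc, ← Real.exp_add, hr, ← Real.exp_nat_mul, mul_assoc, ← Real.exp_add,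
            hkLn]
          ring_nf
  have hg_summable : Summable (fun n : ℕ => C₁ * Real.exp (-(L:ℝ)/2) * r ^ n) :=
    (summable_geometric_of_lt_one hr0.le hr1).mul_left _
  have hf_nonneg : ∀ n : ℕ, 0 ≤ (Real.exp ((L + n : ℕ) : ℝ) / (2 * Real.sinh (((L + n : ℕ) : ℝ)/2))) *
          Real.exp (-((L + n : ℕ) : ℝ)^2 / (4*R)) := by
    intro n
    have hk0 : (0:ℝ) < ((L + n : ℕ) : ℝ) := by
      have : (4:ℝ)*R + 1 ≤ ((L + n : ℕ) : ℝ) := by push_cast; nlinarith [(Nat.cast_nonneg n : (0:ℝ) ≤ n)]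
      nlinarith
    have := Real.sinh_pos_iff.mpr (by linarith : (0:ℝ) < ((L + n : ℕ) : ℝ)/2)
    positivity
  have hf_summable : Summable (fun n : ℕ => (Real.exp ((L + n : ℕ) : ℝ) / (2 * Real.sinh (((L + n : ℕ) : ℝ)/2))) *
          Real.exp (-((L + n : ℕ) : ℝ)^2 / (4*R))) :=
    Summable.of_nonneg_of_le hf_nonneg key hg_summable
  have hsum : ∑' n : ℕ, (Real.exp ((L + n : ℕ) : ℝ) / (2 * Real.sinh (((L + n : ℕ) : ℝ)/2))) *
          Real.exp (-((L + n : ℕ) : ℝ)^2 / (4*R))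
      ≤ C₁ * Real.exp (-(L:ℝ)/2) * (1 - r)⁻¹ := by
    calc _ ≤ ∑' n : ℕ, C₁ * Real.exp (-(L:ℝ)/2) * r ^ n :=
          Summable.tsum_le_tsum key hf_summable hg_summable
      _ = C₁ * Real.exp (-(L:ℝ)/2) * (1 - r)⁻¹ := by
          rw [tsum_mul_left, tsum_geometric_of_lt_one hr0.le hr1]
  refine hsum.trans ?_
  have hexp : Real.exp (-(L:ℝ)/2) ≤ Real.exp (-2*R) := by
    apply Real.exp_le_exp.mpr; linarith
  have hsqrt : (1:ℝ) ≤ Real.sqrt R := Real.one_le_sqrt.mpr hR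
  have h1r : 0 < 1 - r := by linarith
  calc C₁ * Real.exp (-(L:ℝ)/2) * (1 - r)⁻¹
      ≤ C₁ * (Real.sqrt R * Real.exp (-2*R)) * (1 - r)⁻¹ := by
        gcongr
        calc Real.exp (-(L:ℝ)/2) ≤ Real.exp (-2*R) := hexp
          _ = 1 * Real.exp (-2*R) := (one_mul _).symm
          _ ≤ Real.sqrt R * Real.exp (-2*R) := by gcongr
    _ = C₁ / (1 - r) * Real.sqrt R * Real.exp (-2*R) := by ring
end

section
/- There is a universal constant C > 0 with the following property. Let R ≥ 1 be real, let L be an integer with L ≥ 4R + 1, let N > 0, and let (v_i)_{i∈I} be a countable family of real numbers with v_i ≥ L for all i, such that for every integer k ≥ L the number of indices i with k ≤ v_i ≤ k + 1 is at most N e^{k}. Then Σ_{i∈I} e^{−v_i²/(4R)} / (2 sinh(v_i/2)) ≤ C N √R · e^{−2R}. -/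
set_option maxHeartbeats 1000000


open Real MeasureTheory

/-- There is a universal constant `C > 0` with the following property. Let `R ≥ 1`
be real, let `L` be an integer with `L ≥ 4R + 1`, let `N > 0`, and let `(v i)` be a
countable family of reals with `v i ≥ L` for all `i`, such that for every integer
`k ≥ L` the number of indices `i` with `k ≤ v i ≤ k + 1` is at most `N e^k`. Then
`Σ_i e^{−(v i)²/(4R)} / (2 sinh(v i / 2)) ≤ C N √R · e^{−2R}`. -/
theorem stmt_15 :
    ∃ C : ℝ, 0 < C ∧ ∀ (R : ℝ), 1 ≤ R → ∀ (L : ℕ), 4*R + 1 ≤ (L : ℝ) →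
      ∀ (N : ℝ), 0 < N → ∀ (I : Type) (_ : Countable I) (v : I → ℝ),
        (∀ i, (L : ℝ) ≤ v i) →
        (∀ k : ℕ, L ≤ k →
          ({i : I | (k : ℝ) ≤ v i ∧ v i ≤ (k : ℝ) + 1}).Finite ∧
          (({i : I | (k : ℝ) ≤ v i ∧ v i ≤ (k : ℝ) + 1}).ncard : ℝ) ≤ N * Real.exp k) →
        ∑' i : I, Real.exp (-(v i)^2 / (4*R)) / (2 * Real.sinh (v i / 2))
          ≤ C * N * Real.sqrt R * Real.exp (-2*R) := by
  classical
  refine ⟨4, by norm_num, ?_⟩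
  intro R hR L hL N hN I _ v hv hcount
  have hR0 : (0:ℝ) < R := by linarith
  have h4R : (0:ℝ) < 4*R := by linarith
  have hL5 : (5:ℝ) ≤ (L:ℝ) := by linarith
  set r : ℝ := Real.exp (-1) with hr
  have hr0 : 0 ≤ r := (Real.exp_pos _).le
  have hr1 : r < 1 := by
    rw [hr, Real.exp_lt_one_iff]; norm_num
  have hrhalf : r ≤ 1/2 := by
    have h2 : (2:ℝ) ≤ Real.exp 1 := by
      nlinarith [Real.add_one_le_exp (1:ℝ)]
    rw [hr, Real.exp_neg]
    rw [inv_le_comm₀ (Real.exp_pos 1) (by norm_num)]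
    linarith
  set f : I → ℝ := fun i => Real.exp (-(v i)^2 / (4*R)) / (2 * Real.sinh (v i / 2)) with hf
  have hsinh : ∀ x : ℝ, 0 < x → 0 < Real.sinh (x / 2) := by
    intro x hx; exact Real.sinh_pos_iff.mpr (by linarith)
  have hf0 : ∀ i, 0 ≤ f i := by
    intro i
    have hvpos : (0:ℝ) < v i := lt_of_lt_of_le (by linarith) (hv i)
    have h1 := hsinh _ hvpos
    have h2 := Real.exp_pos (-(v i)^2 / (4*R))
    positivity
  -- the per-integer weight
  set F : ℕ → ℝ := fun m => Real.exp (-(m:ℝ)^2 / (4*R)) / (2 * Real.sinh ((m:ℝ) / 2)) with hF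
  have hFpos : ∀ m : ℕ, L ≤ m → 0 ≤ F m := by
    intro m hm
    have hm5 : (5:ℝ) ≤ (m:ℝ) := le_trans hL5 (by exact_mod_cast hm)
    have h1 := hsinh (m:ℝ) (by linarith)
    have h2 := Real.exp_pos (-(m:ℝ)^2 / (4*R))
    positivity
  -- key per-m bound : N e^m F m ≤ 2 N e^{-2R} r^{m-L}
  have hstep : ∀ m : ℕ, L ≤ m →
      N * Real.exp m * F m ≤ 2 * N * Real.exp (-2*R) * r ^ (m - L) := by
    intro m hm
    have hmL : (L:ℝ) ≤ (m:ℝ) := by exact_mod_cast hm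
    have hm5 : (5:ℝ) ≤ (m:ℝ) := le_trans hL5 hmL
    have hsm : 0 < Real.sinh ((m:ℝ)/2) := hsinh _ (by linarith)
    -- e^m / (2 sinh(m/2)) ≤ 2 e^{m/2}
    have hsinhbd : Real.exp m ≤ 2 * Real.exp ((m:ℝ)/2) * (2 * Real.sinh ((m:ℝ)/2)) := by
      have hsinheq : 2 * Real.sinh ((m:ℝ)/2) = Real.exp ((m:ℝ)/2) - Real.exp (-((m:ℝ)/2)) := by
        rw [Real.sinh_eq]; ring
      have he : Real.exp ((m:ℝ)/2) * Real.exp ((m:ℝ)/2) = Real.exp m := by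
        rw [← Real.exp_add]; norm_num
      have he2 : Real.exp ((m:ℝ)/2) * Real.exp (-((m:ℝ)/2)) = 1 := by
        rw [← Real.exp_add]; norm_num
      have h2m : (2:ℝ) ≤ Real.exp m := by
        have : (2:ℝ) ≤ Real.exp 1 := by nlinarith [Real.add_one_le_exp (1:ℝ)]
        exact le_trans this (Real.exp_le_exp.mpr (by linarith))
      nlinarith
    have hFbd : Real.exp m * F m ≤ 2 * Real.exp ((m:ℝ)/2 - (m:ℝ)^2/(4*R)) := by
      have hFm : F m = Real.exp (-(m:ℝ)^2/(4*R)) / (2 * Real.sinh ((m:ℝ)/2)) := rfl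
      rw [hFm]
      have hexp : Real.exp ((m:ℝ)/2 - (m:ℝ)^2/(4*R))
          = Real.exp ((m:ℝ)/2) * Real.exp (-(m:ℝ)^2/(4*R)) := by
        rw [← Real.exp_add]; ring_nf
      rw [hexp]
      rw [← mul_div_assoc, div_le_iff₀ (by positivity)]
      have hexpa := (Real.exp_pos (-(m:ℝ)^2/(4*R))).le
      nlinarith [Real.exp_pos (-(m:ℝ)^2/(4*R))]
    -- exponent bound : m/2 - m²/(4R) ≤ -2R - (m - L)
    have hexpbd : (m:ℝ)/2 - (m:ℝ)^2/(4*R) ≤ -2*R - ((m:ℝ) - (L:ℝ)) := by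
      rw [div_sub_div _ _ (by norm_num : (2:ℝ) ≠ 0) (ne_of_gt h4R), div_le_iff₀ (by positivity)]
      nlinarith [mul_nonneg (sub_nonneg.mpr hmL) (by nlinarith : (0:ℝ) ≤ (m:ℝ) + (L:ℝ) - 6*R),
        mul_nonneg (by linarith : (0:ℝ) ≤ (L:ℝ) - 4*R) (by linarith : (0:ℝ) ≤ (L:ℝ) + 2*R)]
    have hrm : Real.exp ((m:ℝ)/2 - (m:ℝ)^2/(4*R)) ≤ Real.exp (-2*R) * r ^ (m - L) := by
      have hcast : ((m - L : ℕ) : ℝ) = (m:ℝ) - (L:ℝ) := by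
        rw [Nat.cast_sub hm]
      have : Real.exp (-2*R) * r ^ (m - L) = Real.exp (-2*R - ((m:ℝ) - (L:ℝ))) := by
        rw [hr, ← Real.exp_nat_mul, ← Real.exp_add, hcast]; ring_nf
      rw [this]
      exact Real.exp_le_exp.mpr hexpbd
    calc N * Real.exp m * F m = N * (Real.exp m * F m) := by ring
      _ ≤ N * (2 * Real.exp ((m:ℝ)/2 - (m:ℝ)^2/(4*R))) :=
          mul_le_mul_of_nonneg_left hFbd hN.le
      _ ≤ N * (2 * (Real.exp (-2*R) * r ^ (m - L))) := by
          have := mul_le_mul_of_nonneg_left hrm (by norm_num : (0:ℝ) ≤ 2)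
          exact mul_le_mul_of_nonneg_left this hN.le
      _ = 2 * N * Real.exp (-2*R) * r ^ (m - L) := by ring
  -- bound all finite partial sums
  have key : ∀ s : Finset I, ∑ i ∈ s, f i ≤ 4 * N * Real.exp (-2*R) := by
    intro s
    set k : I → ℕ := fun i => ⌊v i⌋₊ with hk
    have hkL : ∀ i, L ≤ k i := fun i => Nat.le_floor (hv i)
    set M := s.sup k with hM
    have hmaps : ∀ i ∈ s, k i ∈ Finset.Icc L M :=
      fun i hi => Finset.mem_Icc.mpr ⟨hkL i, Finset.le_sup hi⟩
    rw [← Finset.sum_fiberwise_of_maps_to hmaps f]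
    have hinner : ∀ m ∈ Finset.Icc L M,
        ∑ i ∈ s.filter (fun i => k i = m), f i
          ≤ 2 * N * Real.exp (-2*R) * r ^ (m - L) := by
      intro m hmIcc
      have hm : L ≤ m := (Finset.mem_Icc.mp hmIcc).1
      have hmL : (L:ℝ) ≤ (m:ℝ) := by exact_mod_cast hm
      have hm5 : (5:ℝ) ≤ (m:ℝ) := le_trans hL5 hmL
      obtain ⟨hfin, hcard⟩ := hcount m hm
      -- pointwise bound f i ≤ F m on the fiber
      have hpt : ∀ i ∈ s.filter (fun i => k i = m), f i ≤ F m := by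
        intro i hi
        have hkim : k i = m := (Finset.mem_filter.mp hi).2
        have hvi : (m:ℝ) ≤ v i := by
          rw [← hkim]
          exact Nat.floor_le (le_trans (by linarith) (hv i))
        have hsm : 0 < Real.sinh ((m:ℝ)/2) := hsinh _ (by linarith)
        rw [hf, hF]
        apply div_le_div₀ (Real.exp_pos _).le
        · apply Real.exp_le_exp.mpr
          rw [div_eq_mul_inv, div_eq_mul_inv]
          exact mul_le_mul_of_nonneg_right (by nlinarith) (by positivity)
        · positivity
        · have : Real.sinh ((m:ℝ)/2) ≤ Real.sinh (v i / 2) :=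
            Real.sinh_le_sinh.mpr (by linarith)
          linarith
      -- cardinality bound
      have hsub : ↑(s.filter (fun i => k i = m)) ⊆
          {i : I | (m : ℝ) ≤ v i ∧ v i ≤ (m : ℝ) + 1} := by
        intro i hi
        simp only [Finset.coe_filter, Set.mem_setOf_eq] at hi ⊢
        obtain ⟨-, hkim⟩ := hi
        constructor
        · rw [← hkim]; exact Nat.floor_le (le_trans (by linarith) (hv i))
        · rw [← hkim] at *
          have := Nat.lt_floor_add_one (v i)
          push_cast at this ⊢
          linarith [this]
      have hcard2 : ((s.filter (fun i => k i = m)).card : ℝ) ≤ N * Real.exp m := by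
        have h1 : (s.filter (fun i => k i = m)).card
            = (↑(s.filter (fun i => k i = m)) : Set I).ncard := by
          rw [Set.ncard_coe_finset]
        have h2 : (↑(s.filter (fun i => k i = m)) : Set I).ncard
            ≤ ({i : I | (m : ℝ) ≤ v i ∧ v i ≤ (m : ℝ) + 1}).ncard :=
          Set.ncard_le_ncard hsub hfin
        calc ((s.filter (fun i => k i = m)).card : ℝ)
            ≤ (({i : I | (m : ℝ) ≤ v i ∧ v i ≤ (m : ℝ) + 1}).ncard : ℝ) := by
              rw [h1]; exact_mod_cast h2
          _ ≤ N * Real.exp m := hcard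
      calc ∑ i ∈ s.filter (fun i => k i = m), f i
          ≤ (s.filter (fun i => k i = m)).card • F m :=
            Finset.sum_le_card_nsmul _ _ _ hpt
        _ = ((s.filter (fun i => k i = m)).card : ℝ) * F m := by
            rw [nsmul_eq_mul]
        _ ≤ (N * Real.exp m) * F m :=
            mul_le_mul_of_nonneg_right hcard2 (hFpos m hm)
        _ ≤ 2 * N * Real.exp (-2*R) * r ^ (m - L) := hstep m hm
    calc ∑ m ∈ Finset.Icc L M, ∑ i ∈ s.filter (fun i => k i = m), f i
        ≤ ∑ m ∈ Finset.Icc L M, 2 * N * Real.exp (-2*R) * r ^ (m - L) :=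
          Finset.sum_le_sum hinner
      _ = 2 * N * Real.exp (-2*R) * ∑ m ∈ Finset.Icc L M, r ^ (m - L) := by
          rw [Finset.mul_sum]
      _ ≤ 2 * N * Real.exp (-2*R) * 2 := by
          have hgeom : ∑ m ∈ Finset.Icc L M, r ^ (m - L) ≤ 2 := by
            have hinj : Set.InjOn (fun m => m - L) ↑(Finset.Icc L M) := by
              intro a ha b hb hab
              simp only [Finset.coe_Icc, Set.mem_Icc] at ha hb
              dsimp only at hab
              omega
            have himg : ∑ j ∈ (Finset.Icc L M).image (fun m => m - L), r ^ j
                = ∑ m ∈ Finset.Icc L M, r ^ (m - L) :=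
              Finset.sum_image (fun a ha b hb h => hinj ha hb h)
            rw [← himg]
            calc ∑ j ∈ (Finset.Icc L M).image (fun m => m - L), r ^ j
                ≤ ∑' j : ℕ, r ^ j := Summable.sum_le_tsum _
                  (fun j _ => pow_nonneg hr0 j) (summable_geometric_of_lt_one hr0 hr1)
              _ = (1 - r)⁻¹ := tsum_geometric_of_lt_one hr0 hr1
              _ ≤ 2 := by
                  rw [inv_le_comm₀ (by linarith) (by norm_num)]
                  linarith
          have hpos : (0:ℝ) ≤ 2 * N * Real.exp (-2*R) := by positivity
          exact mul_le_mul_of_nonneg_left hgeom hpos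
      _ = 4 * N * Real.exp (-2*R) := by ring
  have final : ∑' i, f i ≤ 4 * N * Real.exp (-2*R) :=
    tsum_le_of_sum_le' (by positivity) key
  have hsq : 1 ≤ Real.sqrt R := Real.one_le_sqrt.mpr hR
  calc ∑' i, f i ≤ 4 * N * Real.exp (-2*R) := final
    _ ≤ 4 * N * Real.sqrt R * Real.exp (-2*R) := by
        nlinarith [mul_nonneg (mul_nonneg (by linarith : (0:ℝ) ≤ 4*N)
          (Real.exp_pos (-2*R)).le) (by linarith : (0:ℝ) ≤ Real.sqrt R - 1)]
end
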